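/- Let f, g be log-concave probability densities on ℝ with supports the open intervals I_f, I_g, and let T : I_f → I_g be the transportation map defined by ∫_{−∞}^{x} f = ∫_{−∞}^{T(x)} g. If m : ℝ → ℝ is non-negative integrable with m((r+s)/2) ≥ √(f(r)g(s)) for all r, s, and ∫ℝ m ≤ 1 + ε, then ∫_{I_f} f(x)·(1 − √(T'(x)))²/(2√(T'(x))) dx ≤ ε. -/

import Mathlib

open MeasureTheory

def LogConcaveFn (h : ℝ → ℝ) : Prop :=
  (∀ x, 0 ≤ h x) ∧
  ∀ x y l : ℝ, 0 < l → l < 1 → h x ^ (1 - l) * h y ^ l ≤ h ((1 - l) * x + l * y)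

lemma my_cov {s : Set ℝ} {f f' : ℝ → ℝ} (hs : MeasurableSet s)
    (hf' : ∀ x ∈ s, HasDerivWithinAt f (f' x) s x) (hf : Set.InjOn f s) (g : ℝ → ENNReal) :
    ∫⁻ x in f '' s, g x = ∫⁻ x in s, ENNReal.ofReal |f' x| * g (f x) := by
  simpa only [ContinuousLinearMap.det_toSpanSingleton] using
    lintegral_image_eq_lintegral_abs_det_fderiv_mul volume hs
      (fun x hx => (hf' x hx).hasFDerivWithinAt) hf g

lemma logConcave_pos_convex {f : ℝ → ℝ} (hf : LogConcaveFn f) :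
    Convex ℝ {x : ℝ | 0 < f x} := by
  intro x hx y hy a b ha hb hab
  simp only [Set.mem_setOf_eq] at *
  rcases eq_or_lt_of_le ha with h0 | ha'
  · simpa [← h0, show b = 1 by linarith] using hy
  rcases eq_or_lt_of_le hb with h0 | hb'
  · simpa [← h0, show a = 1 by linarith] using hx
  have key := hf.2 x y b hb' (by linarith)
  have h1 : (0:ℝ) < f x ^ (1 - b) * f y ^ b :=
    mul_pos (Real.rpow_pos_of_pos hx _) (Real.rpow_pos_of_pos hy _)
  have : (1 - b) = a := by linarith
  calc (0:ℝ) < f x ^ (1 - b) * f y ^ b := h1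
    _ ≤ f ((1 - b) * x + b * y) := key
    _ = f (a • x + b • y) := by rw [this]; norm_num

theorem stab_condition
    (f g m : ℝ → ℝ) (T T' : ℝ → ℝ) (ε : ℝ) (hε : 0 < ε)
    (hf : LogConcaveFn f) (hg : LogConcaveFn g)
    (hfi : Integrable f) (hgi : Integrable g)
    (hf1 : ∫ x, f x = 1) (hg1 : ∫ x, g x = 1)
    (hT : ∀ x ∈ {x : ℝ | 0 < f x}, ∫ t in Set.Iic x, f t = ∫ t in Set.Iic (T x), g t)
    (hTmono : MonotoneOn T {x : ℝ | 0 < f x})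
    (hTcont : ContinuousOn T {x : ℝ | 0 < f x})
    (hTbij : Set.BijOn T {x : ℝ | 0 < f x} {y : ℝ | 0 < g y})
    (hderiv : ∀ᵐ x, x ∈ {x : ℝ | 0 < f x} →
      HasDerivAt T (T' x) x ∧ f x = g (T x) * T' x)
    (hm0 : ∀ x, 0 ≤ m x) (hmi : Integrable m)
    (hm : ∀ r s : ℝ, Real.sqrt (f r * g s) ≤ m ((r + s) / 2))
    (hmε : ∫ x, m x ≤ 1 + ε) :
    ∫ x in {x : ℝ | 0 < f x},
        f x * (1 - Real.sqrt (T' x)) ^ 2 / (2 * Real.sqrt (T' x)) ≤ ε := by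
  set S : Set ℝ := {x : ℝ | 0 < f x} with hS
  have hSmeas : MeasurableSet S := (logConcave_pos_convex hf).ordConnected.measurableSet
  -- a full measure subset of S where everything holds pointwise
  obtain ⟨N, hNsub, hNm, hN0⟩ :=
    exists_measurable_superset_of_null (ae_iff.mp hderiv)
  set s : Set ℝ := S \ N with hs
  have hsmeas : MeasurableSet s := hSmeas.diff hNm
  have key : ∀ x ∈ s, 0 < f x ∧ HasDerivAt T (T' x) x ∧ f x = g (T x) * T' x ∧ 0 < T' x := by
    intro x hx
    have hP : x ∈ S → HasDerivAt T (T' x) x ∧ f x = g (T x) * T' x := by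
      by_contra h
      exact hx.2 (hNsub h)
    obtain ⟨hd, he⟩ := hP hx.1
    refine ⟨hx.1, hd, he, ?_⟩
    by_contra h
    push_neg at h
    have : g (T x) * T' x ≤ 0 := mul_nonpos_of_nonneg_of_nonpos (hg.1 _) h
    have := hx.1
    simp only [hS, Set.mem_setOf_eq] at this
    linarith
  set θ : ℝ → ℝ := fun x => (x + T x) / 2 with hθ
  set θd : ℝ → ℝ := fun x => (1 + T' x) / 2 with hθd
  have hθderiv : ∀ x ∈ s, HasDerivWithinAt θ (θd x) s x := by
    intro x hx
    exact (((hasDerivAt_id x).add (key x hx).2.1).div_const 2).hasDerivWithinAt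
  have hθinj : Set.InjOn θ s := by
    have hsm : StrictMonoOn θ s := by
      intro x hx y hy hxy
      have := hTmono hx.1 hy.1 hxy.le
      simp only [hθ]
      linarith
    exact hsm.injOn
  -- change of variables and the bound from ∫ m
  have h1 : ∫⁻ x in s, ENNReal.ofReal |θd x| * ENNReal.ofReal (m (θ x))
      ≤ ENNReal.ofReal (1 + ε) := by
    rw [← my_cov hsmeas hθderiv hθinj (fun y => ENNReal.ofReal (m y))]
    calc ∫⁻ y in θ '' s, ENNReal.ofReal (m y) ≤ ∫⁻ y, ENNReal.ofReal (m y) :=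
          lintegral_mono' Measure.restrict_le_self le_rfl
    _ = ENNReal.ofReal (∫ y, m y) :=
          (ofReal_integral_eq_lintegral_ofReal hmi (Filter.Eventually.of_forall hm0)).symm
    _ ≤ ENNReal.ofReal (1 + ε) := ENNReal.ofReal_le_ofReal hmε
  -- pointwise inequality on s
  have hpt : ∀ x ∈ s,
      ENNReal.ofReal (f x) +
        ENNReal.ofReal (f x * (1 - Real.sqrt (T' x)) ^ 2 / (2 * Real.sqrt (T' x)))
      ≤ ENNReal.ofReal |θd x| * ENNReal.ofReal (m (θ x)) := by
    intro x hx
    obtain ⟨hfx, hd, he, ht⟩ := key x hx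
    have hst : 0 < Real.sqrt (T' x) := Real.sqrt_pos.2 ht
    have hgTx : g (T x) = f x / T' x := by
      field_simp
      linarith
    have hsqrt : Real.sqrt (f x * g (T x)) = f x / Real.sqrt (T' x) := by
      rw [hgTx, show f x * (f x / T' x) = (f x / Real.sqrt (T' x)) ^ 2 by
        rw [div_pow, Real.sq_sqrt ht.le]; ring]
      exact Real.sqrt_sq (by positivity)
    have hmθ : f x / Real.sqrt (T' x) ≤ m (θ x) := by
      have := hm x (T x)
      rwa [hsqrt] at this
    have hθdpos : 0 < θd x := by simp only [hθd]; linarith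
    rw [← ENNReal.ofReal_add (hfx.le) (by positivity),
      ← ENNReal.ofReal_mul (abs_nonneg _)]
    apply ENNReal.ofReal_le_ofReal
    have habs : |θd x| = (1 + T' x) / 2 := abs_of_pos hθdpos
    rw [habs]
    have hkey : f x + f x * (1 - Real.sqrt (T' x)) ^ 2 / (2 * Real.sqrt (T' x))
        = (1 + T' x) / 2 * (f x / Real.sqrt (T' x)) := by
      have h2 : Real.sqrt (T' x) ^ 2 = T' x := Real.sq_sqrt ht.le
      field_simp
      nlinarith [h2]
    rw [hkey]
    apply mul_le_mul_of_nonneg_left hmθ (by linarith)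
  -- sum up
  set tg : ℝ → ℝ := fun x => f x * (1 - Real.sqrt (T' x)) ^ 2 / (2 * Real.sqrt (T' x)) with htg
  have h2 : (∫⁻ x in s, ENNReal.ofReal (f x)) + (∫⁻ x in s, ENNReal.ofReal (tg x))
      ≤ ENNReal.ofReal (1 + ε) := by
    calc (∫⁻ x in s, ENNReal.ofReal (f x)) + (∫⁻ x in s, ENNReal.ofReal (tg x))
        ≤ ∫⁻ x in s, (ENNReal.ofReal (f x) + ENNReal.ofReal (tg x)) := le_lintegral_add _ _
      _ ≤ ∫⁻ x in s, ENNReal.ofReal |θd x| * ENNReal.ofReal (m (θ x)) := by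
          apply lintegral_mono_ae
          filter_upwards [ae_restrict_mem hsmeas] with x hx
          exact hpt x hx
      _ ≤ ENNReal.ofReal (1 + ε) := h1
  have hsS : s =ᵐ[volume] S := by
    rw [Filter.eventuallyEq_set]
    have : ∀ᵐ x, x ∉ N := by
      rw [ae_iff]
      simpa using hN0
    filter_upwards [this] with x hx
    simp only [hs, Set.mem_diff]
    tauto
  have h3 : (∫⁻ x in s, ENNReal.ofReal (f x)) = 1 := by
    rw [setLIntegral_congr hsS]
    have htot : ∫⁻ x, ENNReal.ofReal (f x) = 1 := by
      rw [← ofReal_integral_eq_lintegral_ofReal hfi (Filter.Eventually.of_forall hf.1), hf1,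
        ENNReal.ofReal_one]
    have hcompl : ∫⁻ x in Sᶜ, ENNReal.ofReal (f x) = 0 := by
      rw [setLIntegral_congr_fun hSmeas.compl (fun x hx => ?_),
        lintegral_zero]
      have : f x = 0 := le_antisymm (by simpa [hS] using hx) (hf.1 x)
      simp [this]
    have := lintegral_add_compl (fun x => ENNReal.ofReal (f x)) hSmeas (μ := volume)
    rw [htot, hcompl, add_zero] at this
    simpa using this
  have h4 : (∫⁻ x in s, ENNReal.ofReal (tg x)) ≤ ENNReal.ofReal ε := by
    rw [h3] at h2
    have : ENNReal.ofReal (1 + ε) = 1 + ENNReal.ofReal ε := by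
      rw [ENNReal.ofReal_add (by norm_num) hε.le, ENNReal.ofReal_one]
    rw [this] at h2
    exact (ENNReal.add_le_add_iff_left ENNReal.one_ne_top).mp h2
  have htg0 : ∀ x, 0 ≤ tg x := fun x =>
    div_nonneg (mul_nonneg (hf.1 x) (sq_nonneg _)) (by positivity)
  have h5 : ∫ x in S, tg x = ∫ x in s, tg x := setIntegral_congr_set hsS.symm
  rw [h5]
  by_cases hint : IntegrableOn tg s
  · have := ofReal_integral_eq_lintegral_ofReal hint (Filter.Eventually.of_forall htg0)
    have hle : ENNReal.ofReal (∫ x in s, tg x) ≤ ENNReal.ofReal ε := this ▸ h4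
    have := ENNReal.toReal_mono ENNReal.ofReal_ne_top hle
    rwa [ENNReal.toReal_ofReal (setIntegral_nonneg hsmeas (fun x _ => htg0 x)),
      ENNReal.toReal_ofReal hε.le] at this
  · rw [integral_undef hint]
    exact hε.le
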